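/- Let Σ ∼ (A,B,C,D) be a linear system with reachable subspace R and unobservable subspace N. Suppose R' ⊆ R ⊆ R'' and N' ⊆ N are subspaces, and set X'_1 := R'' ⊖ (R' ∩ N'). Then the controllable-observable subspace X_co = R ⊖ (R ∩ N) is contained in X'_1, and if A', B', C' are the compressions of A, B, C to X'_1, then the moments coincide: C A^k B = C' (A')^k B' for all k ≥ 0. -/

import Mathlib

open Matrix

/-- The reachable subspace `R(A,B) = im [B, AB, ..., A^{n-1}B]`, inside Euclidean space. -/
noncomputable def reachE {ι κ : Type*} [Fintype ι] [Fintype κ] [DecidableEq ι] [DecidableEq κ]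
    (A : Matrix ι ι ℝ) (B : Matrix ι κ ℝ) : Submodule ℝ (EuclideanSpace ℝ ι) :=
  ⨆ k : Fin (Fintype.card ι), LinearMap.range (Matrix.toEuclideanLin (A ^ (k : ℕ) * B))

/-- The unobservable subspace `N(C,A) = ker [C; CA; ...; CA^{n-1}]`, inside Euclidean space. -/
noncomputable def unobsE {ι κ : Type*} [Fintype ι] [Fintype κ] [DecidableEq ι] [DecidableEq κ]
    (C : Matrix κ ι ℝ) (A : Matrix ι ι ℝ) : Submodule ℝ (EuclideanSpace ℝ ι) :=
  ⨅ k : Fin (Fintype.card ι), LinearMap.ker (Matrix.toEuclideanLin (C * A ^ (k : ℕ)))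

section Aux

variable {ι κ ρ : Type*} [Fintype ι] [Fintype κ] [Fintype ρ]
  [DecidableEq ι] [DecidableEq κ] [DecidableEq ρ]

lemma toEuclideanLin_mul (M : Matrix ρ ι ℝ) (N : Matrix ι κ ℝ) :
    Matrix.toEuclideanLin (M * N) = Matrix.toEuclideanLin M ∘ₗ Matrix.toEuclideanLin N := by
  apply LinearMap.ext
  intro v
  simp [Matrix.toEuclideanLin_apply, Matrix.mulVec_mulVec]

lemma toEuclideanLin_mul_apply (M : Matrix ρ ι ℝ) (N : Matrix ι κ ℝ)
    (v : EuclideanSpace ℝ κ) :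
    Matrix.toEuclideanLin (M * N) v = Matrix.toEuclideanLin M (Matrix.toEuclideanLin N v) := by
  rw [toEuclideanLin_mul]; rfl

lemma toEuclideanLin_pow (A : Matrix ι ι ℝ) (k : ℕ) :
    Matrix.toEuclideanLin (A ^ k) = (Matrix.toEuclideanLin A) ^ k := by
  induction k with
  | zero =>
      apply LinearMap.ext
      intro v
      simp [Matrix.toEuclideanLin_apply]
  | succ n ih =>
      rw [pow_succ, pow_succ, toEuclideanLin_mul, ih]
      rfl

/-- Cayley–Hamilton consequence: `A^n` is a combination of lower powers. -/
lemma pow_card_eq_sum (A : Matrix ι ι ℝ) : ∃ c : ℕ → ℝ,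
    A ^ (Fintype.card ι) = ∑ i ∈ Finset.range (Fintype.card ι), c i • A ^ i := by
  refine ⟨fun i => -(A.charpoly.coeff i), ?_⟩
  have hn : A.charpoly.natDegree = Fintype.card ι := A.charpoly_natDegree_eq_dim
  have h1 : A.charpoly.coeff (Fintype.card ι) = 1 := by
    rw [← hn]; exact (A.charpoly_monic).coeff_natDegree
  have h := Matrix.aeval_self_charpoly A
  rw [Polynomial.aeval_eq_sum_range, hn, Finset.sum_range_succ, h1, one_smul] at h
  have h2 := eq_neg_of_add_eq_zero_right h
  rw [h2, ← Finset.sum_neg_distrib]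
  simp [neg_smul]

lemma range_B_le_reachE (A : Matrix ι ι ℝ) (B : Matrix ι κ ℝ) (u : EuclideanSpace ℝ κ) :
    Matrix.toEuclideanLin B u ∈ reachE A B := by
  rcases isEmpty_or_nonempty ι with h | h
  · have : Matrix.toEuclideanLin B u = 0 := Subsingleton.elim _ _
    rw [this]; exact Submodule.zero_mem _
  · have hpos : 0 < Fintype.card ι := Fintype.card_pos
    refine (le_iSup (fun k : Fin (Fintype.card ι) =>
      LinearMap.range (Matrix.toEuclideanLin (A ^ (k : ℕ) * B))) ⟨0, hpos⟩) ?_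
    have h0 : A ^ (((⟨0, hpos⟩ : Fin (Fintype.card ι))) : ℕ) * B = B := by simp
    rw [h0]
    exact ⟨u, rfl⟩

lemma unobsE_le_ker (A : Matrix ι ι ℝ) (C : Matrix ρ ι ℝ) {x : EuclideanSpace ℝ ι}
    (hx : x ∈ unobsE C A) : Matrix.toEuclideanLin C x = 0 := by
  rcases isEmpty_or_nonempty ι with h | h
  · have : x = 0 := Subsingleton.elim _ _
    rw [this, map_zero]
  · have hpos : 0 < Fintype.card ι := Fintype.card_pos
    have h0 := (Submodule.mem_iInf _).mp hx ⟨0, hpos⟩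
    simpa [pow_zero, mul_one] using h0

lemma reachE_invariant (A : Matrix ι ι ℝ) (B : Matrix ι κ ℝ) {x : EuclideanSpace ℝ ι}
    (hx : x ∈ reachE A B) : Matrix.toEuclideanLin A x ∈ reachE A B := by
  set n := Fintype.card ι with hn
  revert x
  have : reachE A B ≤ (reachE A B).comap (Matrix.toEuclideanLin A) := by
    refine iSup_le fun k => ?_
    rintro x ⟨u, rfl⟩
    simp only [Submodule.mem_comap]
    rw [← toEuclideanLin_mul_apply, ← Matrix.mul_assoc, ← pow_succ']
    by_cases hlt : (k : ℕ) + 1 < Fintype.card ι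
    · exact (le_iSup (fun k : Fin n =>
        LinearMap.range (Matrix.toEuclideanLin (A ^ (k : ℕ) * B))) ⟨(k : ℕ) + 1, hlt⟩) ⟨u, rfl⟩
    · have heq : (k : ℕ) + 1 = Fintype.card ι := by have := k.2; omega
      obtain ⟨c, hc⟩ := pow_card_eq_sum A
      rw [heq, hc, Matrix.sum_mul, map_sum]
      simp only [LinearMap.coe_sum, Finset.sum_apply]
      refine Submodule.sum_mem _ fun i hi => ?_
      rw [Finset.mem_range] at hi
      rw [Matrix.smul_mul, _root_.map_smul]
      refine Submodule.smul_mem _ _ ?_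
      exact (le_iSup (fun k : Fin n =>
        LinearMap.range (Matrix.toEuclideanLin (A ^ (k : ℕ) * B))) ⟨i, hi⟩) ⟨u, rfl⟩
  exact fun x hx => this hx

lemma unobsE_invariant (A : Matrix ι ι ℝ) (C : Matrix ρ ι ℝ) {x : EuclideanSpace ℝ ι}
    (hx : x ∈ unobsE C A) : Matrix.toEuclideanLin A x ∈ unobsE C A := by
  set n := Fintype.card ι with hn
  rw [unobsE, Submodule.mem_iInf]
  intro k
  rw [LinearMap.mem_ker, ← toEuclideanLin_mul_apply, Matrix.mul_assoc, ← pow_succ]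
  by_cases hlt : (k : ℕ) + 1 < Fintype.card ι
  · have := (Submodule.mem_iInf _).mp hx ⟨(k : ℕ) + 1, hlt⟩
    rw [LinearMap.mem_ker] at this
    exact this
  · have heq : (k : ℕ) + 1 = Fintype.card ι := by have := k.2; omega
    obtain ⟨c, hc⟩ := pow_card_eq_sum A
    rw [heq, hc, Matrix.mul_sum, map_sum]
    simp only [LinearMap.coe_sum, Finset.sum_apply]
    refine Finset.sum_eq_zero fun i hi => ?_
    rw [Finset.mem_range] at hi
    rw [Matrix.mul_smul, _root_.map_smul]
    have := (Submodule.mem_iInf _).mp hx ⟨i, hi⟩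
    rw [LinearMap.mem_ker] at this
    rw [LinearMap.smul_apply, this, smul_zero]

/-- Key projection fact: if `W ≤ U` then for `x ∈ U`, the part of `x` outside
`V = U ⊓ Wᗮ` lies in `W`. -/
lemma sub_proj_mem {E : Type*} [NormedAddCommGroup E] [InnerProductSpace ℝ E]
    [FiniteDimensional ℝ E] (U W : Submodule ℝ E) (hWU : W ≤ U) {x : E} (hx : x ∈ U) :
    x - (Submodule.orthogonalProjectionOnto (U ⊓ Wᗮ) x : E) ∈ W := by
  set V := U ⊓ Wᗮ with hV
  have hVW : V ≤ Wᗮ := inf_le_right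
  have hWV : W ≤ Vᗮ := (Submodule.le_orthogonal_orthogonal W).trans (Submodule.orthogonal_le hVW)
  set w : E := (Submodule.orthogonalProjectionOnto W x : E) with hw
  have h1 : x - w ∈ Wᗮ := Submodule.sub_starProjection_mem_orthogonal x
  have h2 : x - w ∈ U := Submodule.sub_mem _ hx (hWU (Submodule.orthogonalProjectionOnto W x).2)
  have h3 : x - w ∈ V := ⟨h2, h1⟩
  have h4 : Submodule.orthogonalProjectionOnto V w = 0 :=
    Submodule.orthogonalProjectionOnto_apply_of_mem_orthogonal
      (hWV (Submodule.orthogonalProjectionOnto W x).2)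
  have h5 : (Submodule.orthogonalProjectionOnto V x : E) = x - w := by
    have : Submodule.orthogonalProjectionOnto V x
        = Submodule.orthogonalProjectionOnto V (x - w) + Submodule.orthogonalProjectionOnto V w := by
      rw [← map_add, sub_add_cancel]
    rw [this, h4, add_zero]
    have : (Submodule.orthogonalProjectionOnto V (x - w) : E) = x - w :=
      Submodule.starProjection_eq_self_iff.mpr h3
    rw [this]
  rw [h5, sub_sub_cancel]
  exact (Submodule.orthogonalProjectionOnto W x).2

end Aux

/-- Moment-preserving compression: let `Σ ∼ (A,B,C,D)` have reachable subspace `R` and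
unobservable subspace `N`. If `R' ⊆ R ⊆ R''` and `N' ⊆ N`, and `X₁ = R'' ⊖ (R' ∩ N')`
(`= R'' ⊓ (R' ⊓ N')ᗮ`), then the controllable-observable subspace `X_co = R ⊖ (R ∩ N)` is
contained in `X₁`, and the compressions `A', B', C'` of `A, B, C` to `X₁` satisfy
`C A^k B = C' (A')^k B'` for all `k ≥ 0`. -/
theorem moment_preserving_compression {ι κ ρ : Type*}
    [Fintype ι] [Fintype κ] [Fintype ρ] [DecidableEq ι] [DecidableEq κ] [DecidableEq ρ]
    (A : Matrix ι ι ℝ) (B : Matrix ι κ ℝ) (C : Matrix ρ ι ℝ)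
    (R' R'' N' : Submodule ℝ (EuclideanSpace ℝ ι))
    (hR' : R' ≤ reachE A B) (hR'' : reachE A B ≤ R'') (hN' : N' ≤ unobsE C A) :
    reachE A B ⊓ (reachE A B ⊓ unobsE C A)ᗮ ≤ R'' ⊓ (R' ⊓ N')ᗮ ∧
      ∀ k : ℕ,
        Matrix.toEuclideanLin (C * A ^ k * B) =
          (Matrix.toEuclideanLin C ∘ₗ (R'' ⊓ (R' ⊓ N')ᗮ).subtype) ∘ₗ
            (((R'' ⊓ (R' ⊓ N')ᗮ).orthogonalProjectionOnto.toLinearMap ∘ₗ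
                Matrix.toEuclideanLin A ∘ₗ (R'' ⊓ (R' ⊓ N')ᗮ).subtype) ^ k) ∘ₗ
            ((R'' ⊓ (R' ⊓ N')ᗮ).orthogonalProjectionOnto.toLinearMap ∘ₗ
              Matrix.toEuclideanLin B) := by
  set RR := reachE A B with hRR
  set NN := unobsE C A with hNN
  set W := R' ⊓ N' with hW
  set V := R'' ⊓ Wᗮ with hV
  have hWR : W ≤ RR := inf_le_left.trans hR'
  have hWN : W ≤ NN := inf_le_right.trans hN'
  have hWU : W ≤ R'' := hWR.trans hR''
  constructor
  · exact inf_le_inf hR'' (Submodule.orthogonal_le (inf_le_inf hR' hN'))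
  · intro k
    apply LinearMap.ext
    intro u
    set Ae := Matrix.toEuclideanLin A with hAe
    set Be := Matrix.toEuclideanLin B with hBe
    set Ce := Matrix.toEuclideanLin C with hCe
    set P := (Submodule.orthogonalProjectionOnto V).toLinearMap with hP
    set F : V →ₗ[ℝ] V := P ∘ₗ Ae ∘ₗ V.subtype with hF
    set Bc : EuclideanSpace ℝ κ →ₗ[ℝ] V := P ∘ₗ Be with hBc
    have main : ∀ j : ℕ, (((F ^ j) (Bc u) : EuclideanSpace ℝ ι) ∈ RR) ∧
        ((Ae ^ j) (Be u) - ((F ^ j) (Bc u) : EuclideanSpace ℝ ι) ∈ NN) := by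
      intro j
      induction j with
      | zero =>
          have hBu : Be u ∈ RR := range_B_le_reachE A B u
          have hdiff : Be u - (Submodule.orthogonalProjectionOnto V (Be u) : EuclideanSpace ℝ ι) ∈ W :=
            sub_proj_mem R'' W hWU (hR'' hBu)
          constructor
          · have : ((Bc u : V) : EuclideanSpace ℝ ι)
                = Be u - (Be u - (Submodule.orthogonalProjectionOnto V (Be u) : EuclideanSpace ℝ ι)) := by
              simp [hBc, hP]
            rw [pow_zero, Module.End.one_apply, this]
            exact Submodule.sub_mem _ hBu (hWR hdiff)
          · rw [pow_zero, pow_zero, Module.End.one_apply, Module.End.one_apply]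
            exact hWN hdiff
      | succ j ih =>
          obtain ⟨ih1, ih2⟩ := ih
          set m := (F ^ j) (Bc u) with hm
          set x : EuclideanSpace ℝ ι := (m : EuclideanSpace ℝ ι) with hx
          have hstep : ((F ^ (j + 1)) (Bc u) : EuclideanSpace ℝ ι)
              = (Submodule.orthogonalProjectionOnto V (Ae x) : EuclideanSpace ℝ ι) := by
            rw [pow_succ']
            simp [hF, hP, hx, hm]
          have hAx : Ae x ∈ RR := reachE_invariant A B ih1
          have hdiff : Ae x - (Submodule.orthogonalProjectionOnto V (Ae x) : EuclideanSpace ℝ ι) ∈ W :=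
            sub_proj_mem R'' W hWU (hR'' hAx)
          constructor
          · rw [hstep]
            have : (Submodule.orthogonalProjectionOnto V (Ae x) : EuclideanSpace ℝ ι)
                = Ae x - (Ae x - (Submodule.orthogonalProjectionOnto V (Ae x) : EuclideanSpace ℝ ι)) := by
              exact (sub_sub_cancel _ _).symm
            rw [this]
            exact Submodule.sub_mem _ hAx (hWR hdiff)
          · rw [hstep]
            have heq : (Ae ^ (j + 1)) (Be u)
                - (Submodule.orthogonalProjectionOnto V (Ae x) : EuclideanSpace ℝ ι)
                = Ae ((Ae ^ j) (Be u) - x)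
                  + (Ae x - (Submodule.orthogonalProjectionOnto V (Ae x) : EuclideanSpace ℝ ι)) := by
              rw [pow_succ']
              simp only [Module.End.mul_apply, map_sub]
              abel
            rw [heq]
            exact Submodule.add_mem _ (unobsE_invariant A C ih2) (hWN hdiff)
    obtain ⟨h1, h2⟩ := main k
    have hL : Matrix.toEuclideanLin (C * A ^ k * B) u = Ce ((Ae ^ k) (Be u)) := by
      rw [Matrix.mul_assoc, toEuclideanLin_mul_apply, toEuclideanLin_mul_apply, toEuclideanLin_pow]
    have hker : Ce ((Ae ^ k) (Be u) - ((F ^ k) (Bc u) : EuclideanSpace ℝ ι)) = 0 :=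
      unobsE_le_ker A C h2
    rw [map_sub, sub_eq_zero] at hker
    simp only [LinearMap.comp_apply]
    rw [hL, hker]
    rfl
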